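/- There exists an absolute constant C > 0 such that the following holds. Let a ≠ a' be positive integers, let (a,b,c,d) and (a',b',c',d') be integer quadruples with Q(a,b,c,d) = Q(a',b',c',d') = 0, gcd(a,b,c,d) = gcd(a',b',c',d') = 1, a + b > 0 and a' + b' > 0, and let F(x,y,x',y') = f_a(x,y) − f_{a'}(x',y') be the quaternary quadratic form obtained from the associated binary forms. Then for every finite set S of primes, ∏_{p ∈ S} ( p^{−3} · #{ v ∈ (ℤ/pℤ)⁴ : F(v) ≡ a − a' (mod p) } ) ≤ C · 2^{ω(gcd(a,a'))} · ∏_{p prime, p | a·a'·(a−a'), p ∤ gcd(a,a')} (1 + 1/p), where ω(n) denotes the number of distinct prime divisors of n. (This is the bound on the singular series 𝔖(a−a') of F.) -/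

import Mathlib

open Finset
set_option linter.unusedSectionVars false
set_option linter.unusedTactic false
set_option linter.unreachableTactic false
set_option linter.unnecessarySeqFocus false
set_option maxHeartbeats 1000000

/-- The Descartes quadratic form `Q(a,b,c,d) = 2(a²+b²+c²+d²) - (a+b+c+d)²`. -/
def descartesQ (a b c d : ℤ) : ℤ :=
  2 * (a ^ 2 + b ^ 2 + c ^ 2 + d ^ 2) - (a + b + c + d) ^ 2


namespace SSB


variable {F : Type*} [Field F] [Fintype F] [DecidableEq F]

/-- fiberwise decomposition of a count over pairs -/
lemma card_pair_filter_eq_sum (P : F → F → Prop) [∀ x y, Decidable (P x y)] :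
    (univ.filter fun w : F × F => P w.1 w.2).card
      = ∑ y : F, (univ.filter fun x : F => P x y).card := by
  rw [Finset.card_eq_sum_card_fiberwise (f := Prod.snd) (t := univ) (fun x _ => mem_univ _)]
  refine Finset.sum_congr rfl fun y _ => ?_
  refine Finset.card_nbij' Prod.fst (fun x => (x, y)) ?_ ?_ ?_ ?_
  · rintro ⟨x, y'⟩ hx
    simp only [Finset.mem_coe, mem_filter, mem_univ, true_and] at hx ⊢
    obtain ⟨h1, h2⟩ := hx
    subst h2; exact h1
  · intro x hx
    simp only [Finset.mem_coe, mem_filter, mem_univ, true_and] at hx ⊢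
    simp [hx]
  · rintro ⟨x, y'⟩ hx
    simp only [Finset.mem_coe, mem_filter, mem_univ, true_and] at hx
    simp [hx.2]
  · intro x hx; rfl

/-- the number of representations of `u` by the binary quadratic form `(α,β,γ)` -/
def cnt (α β γ u : F) : ℕ :=
  (univ.filter fun w : F × F => α * w.1 ^ 2 + β * w.1 * w.2 + γ * w.2 ^ 2 = u).card

lemma cnt_sum (α β γ : F) : ∑ u : F, cnt α β γ u = Fintype.card F ^ 2 := by
  have h := Finset.card_eq_sum_card_fiberwise
    (s := (univ : Finset (F × F))) (t := univ)
    (f := fun w : F × F => α * w.1 ^ 2 + β * w.1 * w.2 + γ * w.2 ^ 2)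
    (fun x _ => mem_univ _)
  rw [card_univ, Fintype.card_prod, ← sq] at h
  exact h.symm

lemma card_quad_roots {α : F} (hα : α ≠ 0) (β γ u : F) :
    (univ.filter fun x : F => α * x ^ 2 + β * x + γ = u).card ≤ 2 := by
  classical
  set P : Polynomial F := Polynomial.C α * Polynomial.X ^ 2 + Polynomial.C β * Polynomial.X
    + Polynomial.C (γ - u) with hP
  have hdeg : P.natDegree = 2 := Polynomial.natDegree_quadratic hα
  have hP0 : P ≠ 0 := by
    intro h0
    rw [h0, Polynomial.natDegree_zero] at hdeg
    exact two_ne_zero hdeg.symm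
  have hsub : (univ.filter fun x : F => α * x ^ 2 + β * x + γ = u) ⊆ P.roots.toFinset := by
    intro x hx
    simp only [mem_filter, mem_univ, true_and] at hx
    rw [Multiset.mem_toFinset, Polynomial.mem_roots hP0]
    simp only [Polynomial.IsRoot, hP, Polynomial.eval_add, Polynomial.eval_mul,
      Polynomial.eval_pow, Polynomial.eval_C, Polynomial.eval_X]
    linear_combination hx
  calc (univ.filter fun x : F => α * x ^ 2 + β * x + γ = u).card
      ≤ P.roots.toFinset.card := Finset.card_le_card hsub
    _ ≤ Multiset.card P.roots := P.roots.toFinset_card_le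
    _ ≤ P.natDegree := P.card_roots'
    _ = 2 := hdeg

lemma cnt_le_two_mul {α β γ : F} (h : ¬(α = 0 ∧ β = 0 ∧ γ = 0)) (u : F) :
    cnt α β γ u ≤ 2 * Fintype.card F := by
  classical
  rw [cnt, card_pair_filter_eq_sum (fun x y => α * x ^ 2 + β * x * y + γ * y ^ 2 = u)]
  by_cases hα : α ≠ 0
  · calc ∑ y : F, (univ.filter fun x : F => α * x ^ 2 + β * x * y + γ * y ^ 2 = u).card
        ≤ ∑ _y : F, 2 := by
          refine Finset.sum_le_sum fun y _ => ?_
          have : (univ.filter fun x : F => α * x ^ 2 + β * x * y + γ * y ^ 2 = u)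
              = (univ.filter fun x : F => α * x ^ 2 + (β * y) * x + (γ * y ^ 2) = u) := by
            apply Finset.filter_congr
            intro x _
            constructor <;> intro hh <;> linear_combination hh
          rw [this]
          exact card_quad_roots hα _ _ u
      _ = Fintype.card F * 2 := by rw [Finset.sum_const, card_univ, smul_eq_mul]
      _ ≤ 2 * Fintype.card F := by omega
  push_neg at hα
  subst hα
  by_cases hβ : β ≠ 0
  · -- linear in x for y ≠ 0
    rw [← Finset.sum_erase_add _ _ (mem_univ (0 : F))]
    have h1 : ∀ y ∈ univ.erase (0 : F),
        (univ.filter fun x : F => 0 * x ^ 2 + β * x * y + γ * y ^ 2 = u).card ≤ 1 := by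
      intro y hy
      rw [mem_erase] at hy
      refine Finset.card_le_one.2 fun x1 h1 x2 h2 => ?_
      simp only [mem_filter, mem_univ, true_and] at h1 h2
      have : β * x1 * y = β * x2 * y := by linear_combination h1 - h2
      have h2 : β * x1 = β * x2 := mul_right_cancel₀ hy.1 this
      exact mul_left_cancel₀ hβ h2
    calc (∑ y ∈ univ.erase (0:F),
            (univ.filter fun x : F => 0 * x ^ 2 + β * x * y + γ * y ^ 2 = u).card)
          + (univ.filter fun x : F => 0 * x ^ 2 + β * x * 0 + γ * 0 ^ 2 = u).card
        ≤ (∑ _y ∈ univ.erase (0:F), 1) + Fintype.card F := by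
          gcongr with y hy
          · exact h1 y hy
          · exact le_trans (Finset.card_filter_le _ _) (le_of_eq card_univ)
      _ = (Fintype.card F - 1) + Fintype.card F := by
          rw [Finset.sum_const, smul_eq_mul, mul_one, Finset.card_erase_of_mem (mem_univ _),
            card_univ]
      _ ≤ 2 * Fintype.card F := by omega
  · push_neg at hβ
    subst hβ
    have hγ : γ ≠ 0 := by tauto
    have heq : ∀ y : F, (univ.filter fun x : F => 0 * x ^ 2 + 0 * x * y + γ * y ^ 2 = u).card
        = if γ * y ^ 2 = u then Fintype.card F else 0 := by
      intro y
      by_cases hc : γ * y ^ 2 = u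
      · rw [Finset.filter_true_of_mem fun x _ => by linear_combination hc, card_univ,
          if_pos hc]
      · rw [Finset.filter_false_of_mem fun x _ hx => hc (by linear_combination hx),
          Finset.card_empty, if_neg hc]
    simp_rw [heq]
    rw [← Finset.sum_filter]
    rw [Finset.sum_const, smul_eq_mul]
    have : (univ.filter fun y : F => γ * y ^ 2 = u).card ≤ 2 := by
      have : (univ.filter fun y : F => γ * y ^ 2 = u)
          = (univ.filter fun y : F => γ * y ^ 2 + 0 * y + 0 = u) := by
        apply Finset.filter_congr
        intro x _
        constructor <;> intro hh <;> linear_combination hh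
      rw [this]
      exact card_quad_roots hγ _ _ u
    calc (univ.filter fun y : F => γ * y ^ 2 = u).card * Fintype.card F
        ≤ 2 * Fintype.card F := by
          exact Nat.mul_le_mul_right _ this



variable {F : Type*} [Field F] [Fintype F] [DecidableEq F]

lemma sum_chi_sq (hF : ringChar F ≠ 2) :
    ∑ y : F, quadraticChar F (y ^ 2) = (Fintype.card F : ℤ) - 1 := by
  rw [← Finset.add_sum_erase _ _ (mem_univ (0 : F))]
  have h0 : quadraticChar F ((0 : F) ^ 2) = 0 := by
    simp
  rw [h0, zero_add]
  have : ∀ y ∈ univ.erase (0 : F), quadraticChar F (y ^ 2) = 1 := fun y hy =>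
    quadraticChar_sq_one' (mem_erase.1 hy).1
  rw [Finset.sum_congr rfl this, Finset.sum_const, Finset.card_erase_of_mem (mem_univ _),
    card_univ, nsmul_eq_mul, mul_one, Nat.cast_sub Fintype.card_pos]
  simp

/-- number of square roots -/
lemma card_sqrts (hF : ringChar F ≠ 2) (a : F) :
    ((univ.filter fun x : F => x ^ 2 = a).card : ℤ) = quadraticChar F a + 1 := by
  have := quadraticChar_card_sqrts hF a
  rw [← this]
  congr 1
  rw [show {x : F | x ^ 2 = a}.toFinset = univ.filter fun x : F => x ^ 2 = a from
    Set.toFinset_setOf _]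

lemma sum_chi_shift (w : F) : ∑ z : F, quadraticChar F (z + w) = ∑ z : F, quadraticChar F z :=
  Fintype.sum_equiv (Equiv.addRight w) _ _ (fun z => rfl)

lemma sum_chi_sq_add (hF : ringChar F ≠ 2) {w : F} (hw : w ≠ 0) :
    ∑ y : F, quadraticChar F (y ^ 2 + w) = -1 := by
  classical
  -- group by z = y^2
  have hgroup : ∑ y : F, quadraticChar F (y ^ 2 + w)
      = ∑ z : F, ((quadraticChar F z + 1) * quadraticChar F (z + w)) := by
    have base := Finset.sum_fiberwise_eq_sum_filter univ univ (fun y : F => y ^ 2)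
      (fun y => quadraticChar F (y ^ 2 + w))
    simp only [Finset.mem_univ, Finset.filter_true] at base
    rw [← base]
    refine Finset.sum_congr rfl fun z _ => ?_
    have : ∀ y ∈ univ.filter (fun y : F => y ^ 2 = z),
        quadraticChar F (y ^ 2 + w) = quadraticChar F (z + w) := by
      intro y hy
      rw [(mem_filter.1 hy).2]
    rw [Finset.sum_congr rfl this, Finset.sum_const, nsmul_eq_mul]
    rw [show ((univ.filter fun y : F => y ^ 2 = z).card : ℤ) = quadraticChar F z + 1 from
      card_sqrts hF z]
  rw [hgroup]
  have hsplit : ∑ z : F, ((quadraticChar F z + 1) * quadraticChar F (z + w))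
      = (∑ z : F, quadraticChar F z * quadraticChar F (z + w))
        + ∑ z : F, quadraticChar F (z + w) := by
    rw [← Finset.sum_add_distrib]
    refine Finset.sum_congr rfl fun z _ => by ring
  rw [hsplit, sum_chi_shift, quadraticChar_sum_zero hF, add_zero]
  have hmul : ∀ z : F, quadraticChar F z * quadraticChar F (z + w)
      = quadraticChar F (z * (z + w)) := fun z => (map_mul _ _ _).symm
  rw [Finset.sum_congr rfl fun z _ => hmul z]
  have h0 : quadraticChar F ((0 : F) * (0 + w)) = 0 := by simp
  have herase : ∑ z ∈ univ.erase (0 : F), quadraticChar F (z * (z + w))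
      = ∑ z : F, quadraticChar F (z * (z + w)) - quadraticChar F ((0:F) * (0 + w)) :=
    Finset.sum_erase_eq_sub (mem_univ _)
  rw [h0, sub_zero] at herase
  rw [← herase]
  have hchg : ∀ z ∈ univ.erase (0 : F),
      quadraticChar F (z * (z + w)) = quadraticChar F (1 + w * z⁻¹) := by
    intro z hz
    have hz0 : z ≠ 0 := (mem_erase.1 hz).1
    have : z * (z + w) = z ^ 2 * (1 + w * z⁻¹) := by field_simp
    rw [this, map_mul, quadraticChar_sq_one' hz0, one_mul]
  rw [Finset.sum_congr rfl hchg]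
  have hbij : ∑ z ∈ univ.erase (0 : F), quadraticChar F (1 + w * z⁻¹)
      = ∑ v ∈ univ.erase (1 : F), quadraticChar F v := by
    refine Finset.sum_nbij' (fun z => 1 + w * z⁻¹) (fun v => w * (v - 1)⁻¹) ?_ ?_ ?_ ?_ ?_
    · intro z hz
      have hz0 : z ≠ 0 := (mem_erase.1 hz).1
      simp only [mem_erase, mem_univ, and_true]
      intro h
      have h2 : w * z⁻¹ = 0 := by linear_combination h
      exact (mul_ne_zero hw (inv_ne_zero hz0)) h2
    · intro v hv
      have hv1 : v ≠ 1 := (mem_erase.1 hv).1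
      simp only [mem_erase, mem_univ, and_true]
      exact mul_ne_zero hw (inv_ne_zero (sub_ne_zero.2 hv1))
    · intro z hz
      have hz0 : z ≠ 0 := (mem_erase.1 hz).1
      field_simp
      simp [hw]
    · intro v hv
      have hv1 : v ≠ 1 := (mem_erase.1 hv).1
      have : v - 1 ≠ 0 := sub_ne_zero.2 hv1
      field_simp
      ring
    · intro z hz; rfl
  rw [hbij, Finset.sum_erase_eq_sub (mem_univ (1 : F)), quadraticChar_sum_zero hF, map_one]
  ring


variable {F : Type*} [Field F] [Fintype F] [DecidableEq F]

lemma sum_chi_quad (hF : ringChar F ≠ 2) {D : F} (hD : D ≠ 0) (w : F) :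
    ∑ y : F, quadraticChar F (D * y ^ 2 + w)
      = if w = 0 then ((Fintype.card F : ℤ) - 1) * quadraticChar F D
        else - quadraticChar F D := by
  by_cases hw : w = 0
  · subst hw
    rw [if_pos rfl]
    have : ∀ y : F, quadraticChar F (D * y ^ 2 + 0)
        = quadraticChar F D * quadraticChar F (y ^ 2) := by
      intro y; rw [add_zero, map_mul]
    rw [Finset.sum_congr rfl fun y _ => this y, ← Finset.mul_sum, sum_chi_sq hF]
    ring
  · rw [if_neg hw]
    have : ∀ y : F, quadraticChar F (D * y ^ 2 + w)
        = quadraticChar F D * quadraticChar F (y ^ 2 + D⁻¹ * w) := by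
      intro y
      rw [← map_mul]
      congr 1
      field_simp
    rw [Finset.sum_congr rfl fun y _ => this y, ← Finset.mul_sum,
      sum_chi_sq_add hF (mul_ne_zero (inv_ne_zero hD) hw)]
    ring

lemma conic_card (hF : ringChar F ≠ 2) {D : F} (hD : D ≠ 0) (u : F) :
    (((univ.filter fun w : F × F => w.1 ^ 2 - D * w.2 ^ 2 = u).card : ℤ))
      = Fintype.card F
        + (if u = 0 then ((Fintype.card F : ℤ) - 1) * quadraticChar F D
           else - quadraticChar F D) := by
  rw [card_pair_filter_eq_sum (fun x y : F => x ^ 2 - D * y ^ 2 = u)]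
  have hfib : ∀ y : F, ((univ.filter fun x : F => x ^ 2 - D * y ^ 2 = u).card : ℤ)
      = quadraticChar F (D * y ^ 2 + u) + 1 := by
    intro y
    rw [show (univ.filter fun x : F => x ^ 2 - D * y ^ 2 = u)
        = (univ.filter fun x : F => x ^ 2 = D * y ^ 2 + u) from
      Finset.filter_congr fun x _ => by constructor <;> intro h <;> linear_combination h]
    exact card_sqrts hF _
  push_cast
  rw [Finset.sum_congr rfl fun y _ => hfib y, Finset.sum_add_distrib, sum_chi_quad hF hD u,
    Finset.sum_const, card_univ, nsmul_eq_mul, mul_one]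
  ring

/-- exact representation count for a nondegenerate binary quadratic form, `α ≠ 0` case -/
lemma cnt_eq_aux (hF : ringChar F ≠ 2) {α β γ : F} (hα : α ≠ 0)
    (hD : β ^ 2 - 4 * (α * γ) ≠ 0) (u : F) :
    ((cnt α β γ u : ℤ))
      = Fintype.card F - quadraticChar F (β ^ 2 - 4 * (α * γ))
        + if u = 0 then (Fintype.card F : ℤ) * quadraticChar F (β ^ 2 - 4 * (α * γ)) else 0 := by
  have h2 : (2 : F) ≠ 0 := Ring.two_ne_zero hF
  have h4 : (4 : F) ≠ 0 := by
    have : (4 : F) = 2 * 2 := by norm_num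
    rw [this]; exact mul_ne_zero h2 h2
  have h2a : (2 : F) * α ≠ 0 := mul_ne_zero h2 hα
  have h4a : (4 : F) * α ≠ 0 := mul_ne_zero h4 hα
  set D : F := β ^ 2 - 4 * (α * γ) with hDdef
  -- change of variables to the conic x² - D y² = 4αu
  have hcard : cnt α β γ u
      = (univ.filter fun w : F × F => w.1 ^ 2 - D * w.2 ^ 2 = 4 * α * u).card := by
    rw [cnt]
    refine Finset.card_nbij' (fun w => (2 * α * w.1 + β * w.2, w.2))
      (fun w => ((w.1 - β * w.2) * (2 * α)⁻¹, w.2)) ?_ ?_ ?_ ?_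
    · rintro ⟨x, y⟩ hxy
      simp only [Finset.mem_coe, mem_filter, mem_univ, true_and] at hxy ⊢
      linear_combination (4 * α) * hxy
    · rintro ⟨X, y⟩ hXy
      simp only [Finset.mem_coe, mem_filter, mem_univ, true_and] at hXy ⊢
      have key : (4 * α) * (α * ((X - β * y) * (2 * α)⁻¹) ^ 2
          + β * ((X - β * y) * (2 * α)⁻¹) * y + γ * y ^ 2) = X ^ 2 - D * y ^ 2 := by
        rw [hDdef]
        field_simp
        ring
      have h2' := key.trans hXy
      exact mul_left_cancel₀ h4a h2'
    · rintro ⟨x, y⟩ _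
      rw [Prod.ext_iff]
      refine ⟨?_, rfl⟩
      show (2 * α * x + β * y - β * y) * (2 * α)⁻¹ = x
      first
      | (field_simp; ring)
      | field_simp
    · rintro ⟨X, y⟩ _
      rw [Prod.ext_iff]
      refine ⟨?_, rfl⟩
      show 2 * α * ((X - β * y) * (2 * α)⁻¹) + β * y = X
      first
      | (field_simp; ring)
      | field_simp
  rw [hcard, conic_card hF hD (4 * α * u)]
  have hiff : 4 * α * u = 0 ↔ u = 0 := by
    constructor
    · intro h
      rcases mul_eq_zero.1 h with h | h
      · exact absurd h (by rwa [show (4 : F) * α = 4 * α from rfl] at h4a)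
      · exact h
    · intro h; rw [h, mul_zero]
  by_cases hu : u = 0
  · rw [if_pos (hiff.2 hu), if_pos hu]; ring
  · rw [if_neg (fun h => hu (hiff.1 h)), if_neg hu]; ring

lemma cnt_eq (hF : ringChar F ≠ 2) {α β γ : F}
    (hD : β ^ 2 - 4 * (α * γ) ≠ 0) (u : F) :
    ((cnt α β γ u : ℤ))
      = Fintype.card F - quadraticChar F (β ^ 2 - 4 * (α * γ))
        + if u = 0 then (Fintype.card F : ℤ) * quadraticChar F (β ^ 2 - 4 * (α * γ)) else 0 := by
  by_cases hα : α ≠ 0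
  · exact cnt_eq_aux hF hα hD u
  push_neg at hα; subst hα
  by_cases hγ : γ ≠ 0
  · -- swap variables
    have hswap : cnt (0 : F) β γ u = cnt γ β 0 u := by
      rw [cnt, cnt]
      refine Finset.card_nbij' Prod.swap Prod.swap ?_ ?_ ?_ ?_
      · rintro ⟨x, y⟩ h
        simp only [Finset.mem_coe, mem_filter, mem_univ, true_and, Prod.fst_swap, Prod.snd_swap] at h ⊢
        linear_combination h
      · rintro ⟨x, y⟩ h
        simp only [Finset.mem_coe, mem_filter, mem_univ, true_and, Prod.fst_swap, Prod.snd_swap] at h ⊢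
        linear_combination h
      · rintro ⟨x, y⟩ _; rfl
      · rintro ⟨x, y⟩ _; rfl
    have hD' : β ^ 2 - 4 * (γ * 0) ≠ 0 := by
      rwa [show β ^ 2 - 4 * (γ * 0) = β ^ 2 - 4 * (0 * γ) from by ring]
    rw [hswap, cnt_eq_aux hF hγ hD' u]
    rw [show β ^ 2 - 4 * (γ * 0) = β ^ 2 - 4 * (0 * γ) from by ring]
  push_neg at hγ; subst hγ
  -- now f = βxy, D = β²
  have hβ : β ≠ 0 := by
    intro h; apply hD; rw [h]; ring
  have hχ : quadraticChar F (β ^ 2 - 4 * (0 * 0)) = 1 := by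
    rw [show β ^ 2 - 4 * ((0 : F) * 0) = β ^ 2 from by ring]
    exact quadraticChar_sq_one' hβ
  rw [hχ]
  have hcnt : cnt (0 : F) β 0 u
      = (if u = 0 then Fintype.card F else 0) + (Fintype.card F - 1) := by
    rw [cnt, card_pair_filter_eq_sum (fun x y : F => 0 * x ^ 2 + β * x * y + 0 * y ^ 2 = u)]
    rw [← Finset.add_sum_erase _ _ (mem_univ (0 : F))]
    congr 1
    · -- fiber at y = 0
      by_cases hu : u = 0
      · subst hu
        rw [if_pos rfl, Finset.filter_true_of_mem (fun x _ => by ring), card_univ]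
      · rw [if_neg hu, Finset.filter_false_of_mem (fun x _ h => hu (by linear_combination -h)),
          Finset.card_empty]
    · -- fibers at y ≠ 0 each have exactly one point
      have h1 : ∀ y ∈ univ.erase (0 : F),
          (univ.filter fun x : F => 0 * x ^ 2 + β * x * y + 0 * y ^ 2 = u).card = 1 := by
        intro y hy
        have hy0 : y ≠ 0 := (mem_erase.1 hy).1
        rw [Finset.card_eq_one]
        refine ⟨u * (β * y)⁻¹, ?_⟩
        ext x
        simp only [mem_filter, mem_univ, true_and, mem_singleton]
        constructor
        · intro h
          field_simp
          linear_combination h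
        · intro h
          subst h
          first
          | (field_simp; ring)
          | field_simp
      rw [Finset.sum_congr rfl h1, Finset.sum_const, smul_eq_mul, mul_one,
        Finset.card_erase_of_mem (mem_univ _), card_univ]
  rw [hcnt]
  have hq : (1 : ℕ) ≤ Fintype.card F := Fintype.card_pos
  by_cases hu : u = 0
  · rw [if_pos hu, if_pos hu]
    push_cast [Nat.cast_sub hq]
    ring
  · rw [if_neg hu, if_neg hu]
    push_cast [Nat.cast_sub hq]
    ring


variable {F : Type*} [Field F] [Fintype F] [DecidableEq F]

/-- decomposition of the quaternary count as a convolution of binary counts -/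
lemma N_eq (A B G A' B' G' t : F) :
    (Nat.card {v : F × F × F × F //
        A * v.1 ^ 2 + B * v.1 * v.2.1 + G * v.2.1 ^ 2 -
          (A' * v.2.2.1 ^ 2 + B' * v.2.2.1 * v.2.2.2 + G' * v.2.2.2 ^ 2) = t})
      = ∑ u : F, cnt A B G u * cnt A' B' G' (u - t) := by
  classical
  rw [Nat.card_eq_fintype_card, Fintype.card_subtype]
  -- reindex to (F×F) × (F×F)
  have hre : (univ.filter fun v : F × F × F × F =>
        A * v.1 ^ 2 + B * v.1 * v.2.1 + G * v.2.1 ^ 2 -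
          (A' * v.2.2.1 ^ 2 + B' * v.2.2.1 * v.2.2.2 + G' * v.2.2.2 ^ 2) = t).card
      = (univ.filter fun w : (F × F) × (F × F) =>
          A * w.1.1 ^ 2 + B * w.1.1 * w.1.2 + G * w.1.2 ^ 2 -
            (A' * w.2.1 ^ 2 + B' * w.2.1 * w.2.2 + G' * w.2.2 ^ 2) = t).card := by
    refine Finset.card_nbij' (fun v => ((v.1, v.2.1), (v.2.2.1, v.2.2.2)))
      (fun w => (w.1.1, w.1.2, w.2.1, w.2.2)) ?_ ?_ ?_ ?_
    · rintro ⟨x, y, z, w⟩ h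
      simpa using h
    · rintro ⟨⟨x, y⟩, ⟨z, w⟩⟩ h
      simpa using h
    · rintro ⟨x, y, z, w⟩ _
      rfl
    · rintro ⟨⟨x, y⟩, ⟨z, w⟩⟩ _
      rfl
  rw [hre]
  rw [Finset.card_eq_sum_card_fiberwise
    (f := fun w : (F × F) × (F × F) => A * w.1.1 ^ 2 + B * w.1.1 * w.1.2 + G * w.1.2 ^ 2)
    (t := univ) (fun x _ => mem_univ _)]
  refine Finset.sum_congr rfl fun u _ => ?_
  rw [Finset.filter_filter]
  have hfilter : ((univ : Finset ((F × F) × (F × F))).filter fun w =>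
        (A * w.1.1 ^ 2 + B * w.1.1 * w.1.2 + G * w.1.2 ^ 2 -
          (A' * w.2.1 ^ 2 + B' * w.2.1 * w.2.2 + G' * w.2.2 ^ 2) = t) ∧
        A * w.1.1 ^ 2 + B * w.1.1 * w.1.2 + G * w.1.2 ^ 2 = u)
      = ((univ : Finset ((F × F) × (F × F))).filter fun w =>
          (A * w.1.1 ^ 2 + B * w.1.1 * w.1.2 + G * w.1.2 ^ 2 = u) ∧
          (A' * w.2.1 ^ 2 + B' * w.2.1 * w.2.2 + G' * w.2.2 ^ 2 = u - t)) := by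
    refine Finset.filter_congr fun w _ => ?_
    constructor
    · rintro ⟨h1, h2⟩
      exact ⟨h2, by linear_combination h2 - h1⟩
    · rintro ⟨h1, h2⟩
      exact ⟨by linear_combination h1 - h2, h1⟩
  rw [hfilter]
  rw [show ((univ : Finset ((F × F) × (F × F)))) = univ ×ˢ univ from
    (Finset.univ_product_univ).symm]
  rw [Finset.filter_product (fun w : F × F => A * w.1 ^ 2 + B * w.1 * w.2 + G * w.2 ^ 2 = u)
    (fun w : F × F => A' * w.1 ^ 2 + B' * w.1 * w.2 + G' * w.2 ^ 2 = u - t)]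
  rw [Finset.card_product]
  rfl

/-- key identity when the first form is nondegenerate -/
lemma key (hF : ringChar F ≠ 2) {A B G : F} (hD : B ^ 2 - 4 * (A * G) ≠ 0) (A' B' G' t : F) :
    ((∑ u : F, cnt A B G u * cnt A' B' G' (u - t) : ℕ) : ℤ)
      = (Fintype.card F - quadraticChar F (B ^ 2 - 4 * (A * G))) * (Fintype.card F : ℤ) ^ 2
        + (Fintype.card F : ℤ) * quadraticChar F (B ^ 2 - 4 * (A * G))
          * cnt A' B' G' (-t) := by
  push_cast
  set q : ℤ := (Fintype.card F : ℤ)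
  set e : ℤ := (quadraticChar F (B ^ 2 - 4 * (A * G)) : ℤ)
  have h1 : ∀ u : F, ((cnt A B G u : ℤ)) * cnt A' B' G' (u - t)
      = (q - e) * cnt A' B' G' (u - t)
        + (if u = 0 then q * e * cnt A' B' G' (u - t) else 0) := by
    intro u
    rw [cnt_eq hF hD u]
    by_cases hu : u = 0
    · rw [if_pos hu, if_pos hu]; ring
    · rw [if_neg hu, if_neg hu]; ring
  rw [Finset.sum_congr rfl fun u _ => h1 u, Finset.sum_add_distrib]
  have h2 : (∑ u : F, if u = 0 then q * e * cnt A' B' G' (u - t) else 0)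
      = q * e * cnt A' B' G' (-t) := by
    rw [Finset.sum_ite_eq' univ (0 : F) (fun u => q * e * (cnt A' B' G' (u - t) : ℤ))]
    simp
  rw [h2, ← Finset.mul_sum]
  have h3 : ∑ u : F, ((cnt A' B' G' (u - t) : ℤ)) = q ^ 2 := by
    have := Fintype.sum_equiv (Equiv.subRight t) (fun u => ((cnt A' B' G' (u - t) : ℤ)))
      (fun u => ((cnt A' B' G' u : ℤ))) (fun u => rfl)
    rw [this]
    rw [show ∑ u : F, ((cnt A' B' G' u : ℤ)) = ((∑ u : F, cnt A' B' G' u : ℕ) : ℤ) by push_cast; rfl,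
      cnt_sum]
    push_cast; rfl
  rw [h3]

/-- key identity when the second form is nondegenerate -/
lemma key' (hF : ringChar F ≠ 2) {A' B' G' : F} (hD : B' ^ 2 - 4 * (A' * G') ≠ 0) (A B G t : F) :
    ((∑ u : F, cnt A B G u * cnt A' B' G' (u - t) : ℕ) : ℤ)
      = (Fintype.card F - quadraticChar F (B' ^ 2 - 4 * (A' * G'))) * (Fintype.card F : ℤ) ^ 2
        + (Fintype.card F : ℤ) * quadraticChar F (B' ^ 2 - 4 * (A' * G'))
          * cnt A B G t := by
  push_cast
  set q : ℤ := (Fintype.card F : ℤ)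
  set e : ℤ := (quadraticChar F (B' ^ 2 - 4 * (A' * G')) : ℤ)
  have h1 : ∀ u : F, ((cnt A B G u : ℤ)) * cnt A' B' G' (u - t)
      = (q - e) * cnt A B G u
        + (if u = t then q * e * cnt A B G u else 0) := by
    intro u
    rw [cnt_eq hF hD (u - t)]
    by_cases hu : u = t
    · rw [if_pos hu, if_pos (by rw [hu, sub_self])]
      ring
    · rw [if_neg hu, if_neg (fun h => hu (by linear_combination h))]
      ring
  rw [Finset.sum_congr rfl fun u _ => h1 u, Finset.sum_add_distrib]
  have h2 : (∑ u : F, if u = t then q * e * cnt A B G u else 0)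
      = q * e * cnt A B G t := by
    rw [Finset.sum_ite_eq' univ (t : F) (fun u => q * e * (cnt A B G u : ℤ))]
    simp
  rw [h2, ← Finset.mul_sum]
  have h3 : ∑ u : F, ((cnt A B G u : ℤ)) = q ^ 2 := by
    rw [show ∑ u : F, ((cnt A B G u : ℤ)) = ((∑ u : F, cnt A B G u : ℕ) : ℤ) by push_cast; rfl,
      cnt_sum]
    push_cast; rfl
  rw [h3]


variable {F : Type*} [Field F] [Fintype F] [DecidableEq F]

lemma bound_any {A B G A' B' G' t : F} (hnz' : ¬(A' = 0 ∧ B' = 0 ∧ G' = 0)) :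
    ∑ u : F, cnt A B G u * cnt A' B' G' (u - t) ≤ 2 * Fintype.card F ^ 3 := by
  calc ∑ u : F, cnt A B G u * cnt A' B' G' (u - t)
      ≤ ∑ u : F, cnt A B G u * (2 * Fintype.card F) :=
        Finset.sum_le_sum fun u _ => Nat.mul_le_mul_left _ (cnt_le_two_mul hnz' _)
    _ = (∑ u : F, cnt A B G u) * (2 * Fintype.card F) := by rw [Finset.sum_mul]
    _ = Fintype.card F ^ 2 * (2 * Fintype.card F) := by rw [cnt_sum]
    _ = 2 * Fintype.card F ^ 3 := by ring

lemma bound_one_left (hF : ringChar F ≠ 2) {A B G : F} (hD : B ^ 2 - 4 * (A * G) ≠ 0)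
    {A' B' G' : F} (hnz' : ¬(A' = 0 ∧ B' = 0 ∧ G' = 0)) (t : F) :
    ((∑ u : F, cnt A B G u * cnt A' B' G' (u - t) : ℕ) : ℤ)
      ≤ (Fintype.card F : ℤ) ^ 3 + (Fintype.card F : ℤ) ^ 2 := by
  rw [key hF hD A' B' G' t]
  have hq0 : (0 : ℤ) ≤ (Fintype.card F : ℤ) := Int.natCast_nonneg _
  have hc0 : (0 : ℤ) ≤ cnt A' B' G' (-t) := Int.natCast_nonneg _
  have hc2 : ((cnt A' B' G' (-t) : ℕ) : ℤ) ≤ 2 * (Fintype.card F : ℤ) := by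
    exact_mod_cast Int.ofNat_le.2 (cnt_le_two_mul hnz' (-t))
  rcases quadraticChar_dichotomy hD with he | he <;> rw [he] <;> push_cast <;> nlinarith

lemma bound_one_right (hF : ringChar F ≠ 2) {A' B' G' : F} (hD : B' ^ 2 - 4 * (A' * G') ≠ 0)
    {A B G : F} (hnz : ¬(A = 0 ∧ B = 0 ∧ G = 0)) (t : F) :
    ((∑ u : F, cnt A B G u * cnt A' B' G' (u - t) : ℕ) : ℤ)
      ≤ (Fintype.card F : ℤ) ^ 3 + (Fintype.card F : ℤ) ^ 2 := by
  rw [key' hF hD A B G t]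
  have hq0 : (0 : ℤ) ≤ (Fintype.card F : ℤ) := Int.natCast_nonneg _
  have hc0 : (0 : ℤ) ≤ cnt A B G t := Int.natCast_nonneg _
  have hc2 : ((cnt A B G t : ℕ) : ℤ) ≤ 2 * (Fintype.card F : ℤ) := by
    exact_mod_cast Int.ofNat_le.2 (cnt_le_two_mul hnz t)
  rcases quadraticChar_dichotomy hD with he | he <;> rw [he] <;> push_cast <;> nlinarith

lemma bound_good (hF : ringChar F ≠ 2) {A B G A' B' G' : F}
    (hD : B ^ 2 - 4 * (A * G) ≠ 0) (hD' : B' ^ 2 - 4 * (A' * G') ≠ 0)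
    (heq : quadraticChar F (B ^ 2 - 4 * (A * G)) = quadraticChar F (B' ^ 2 - 4 * (A' * G')))
    {t : F} (ht : t ≠ 0) :
    ((∑ u : F, cnt A B G u * cnt A' B' G' (u - t) : ℕ) : ℤ)
      ≤ (Fintype.card F : ℤ) ^ 3 := by
  rw [key hF hD A' B' G' t]
  have hcnt : ((cnt A' B' G' (-t) : ℕ) : ℤ)
      = Fintype.card F - quadraticChar F (B' ^ 2 - 4 * (A' * G')) := by
    rw [cnt_eq hF hD' (-t), if_neg (neg_ne_zero.2 ht), add_zero]
  rw [hcnt, ← heq]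
  have hq0 : (0 : ℤ) ≤ (Fintype.card F : ℤ) := Int.natCast_nonneg _
  rcases quadraticChar_dichotomy hD with he | he <;> rw [he] <;> push_cast <;> nlinarith


lemma chi_neg_four_sq {F : Type*} [Field F] [Fintype F] [DecidableEq F]
    (hF : ringChar F ≠ 2) {x : F} (hx : x ≠ 0) :
    quadraticChar F (-4 * x ^ 2) = quadraticChar F (-1) := by
  have h2 : (2 : F) ≠ 0 := Ring.two_ne_zero hF
  have h2x : (2 : F) * x ≠ 0 := mul_ne_zero h2 hx
  rw [show (-4 : F) * x ^ 2 = -1 * (2 * x) ^ 2 from by ring, map_mul,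
    quadraticChar_sq_one' h2x, mul_one]

section ZModPart
variable {p : ℕ} [hp : Fact p.Prime]

lemma disc_eq (a b c d : ℤ) (hQ : descartesQ a b c d = 0) :
    ((a + b + d - c : ℤ) : ZMod p) ^ 2
      - 4 * (((a + b : ℤ) : ZMod p) * ((a + d : ℤ) : ZMod p))
      = -4 * ((a : ℤ) : ZMod p) ^ 2 := by
  have hz : ((a + b + d - c) ^ 2 - 4 * ((a + b) * (a + d)) : ℤ)
      = -4 * a ^ 2 + descartesQ a b c d := by
    rw [descartesQ]; ring
  rw [hQ, add_zero] at hz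
  have := congrArg (fun z : ℤ => (z : ZMod p)) hz
  push_cast at this
  convert this using 1 <;> push_cast <;> ring

lemma not_all_zero (hp2 : p ≠ 2) (a b c d : ℤ) (hQ : descartesQ a b c d = 0)
    (hg : Nat.gcd (Int.gcd a b) (Int.gcd c d) = 1) :
    ¬(((a + b : ℤ) : ZMod p) = 0 ∧ ((a + b + d - c : ℤ) : ZMod p) = 0 ∧
      ((a + d : ℤ) : ZMod p) = 0) := by
  haveI : NeZero p := ⟨hp.out.ne_zero⟩
  have hF : ringChar (ZMod p) ≠ 2 := by
    rw [ZMod.ringChar_zmod_n]; exact hp2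
  have h2 : (2 : ZMod p) ≠ 0 := Ring.two_ne_zero hF
  have h4 : (4 : ZMod p) ≠ 0 := by
    have : (4 : ZMod p) = 2 * 2 := by norm_num
    rw [this]; exact mul_ne_zero h2 h2
  rintro ⟨hA, hB, hG⟩
  have hdisc := disc_eq (p := p) a b c d hQ
  rw [hA, hB, hG] at hdisc
  have ha : ((a : ℤ) : ZMod p) = 0 := by
    have h0 : (-4 : ZMod p) * ((a : ℤ) : ZMod p) ^ 2 = 0 := by rw [← hdisc]; ring
    rcases mul_eq_zero.1 h0 with h | h
    · exact absurd (neg_eq_zero.1 h) h4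
    · exact (pow_eq_zero_iff (by norm_num : (2:ℕ) ≠ 0)).1 h
  have hb : ((b : ℤ) : ZMod p) = 0 := by
    have : ((b : ℤ) : ZMod p) = ((a + b : ℤ) : ZMod p) - ((a : ℤ) : ZMod p) := by
      push_cast; ring
    rw [this, hA, ha, sub_zero]
  have hd : ((d : ℤ) : ZMod p) = 0 := by
    have : ((d : ℤ) : ZMod p) = ((a + d : ℤ) : ZMod p) - ((a : ℤ) : ZMod p) := by
      push_cast; ring
    rw [this, hG, ha, sub_zero]
  have hc : ((c : ℤ) : ZMod p) = 0 := by
    have : ((c : ℤ) : ZMod p) = ((a : ℤ) : ZMod p) + ((b : ℤ) : ZMod p) + ((d : ℤ) : ZMod p)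
        - ((a + b + d - c : ℤ) : ZMod p) := by
      push_cast; ring
    rw [this, hB, ha, hb, hd, sub_zero]; ring
  rw [ZMod.intCast_zmod_eq_zero_iff_dvd] at ha hb hc hd
  have h1 : (p : ℤ) ∣ Int.gcd a b := Int.dvd_coe_gcd ha hb
  have h2' : (p : ℤ) ∣ Int.gcd c d := Int.dvd_coe_gcd hc hd
  have h3 : (p : ℕ) ∣ Nat.gcd (Int.gcd a b) (Int.gcd c d) :=
    Nat.dvd_gcd (Int.natCast_dvd_natCast.1 h1) (Int.natCast_dvd_natCast.1 h2')
  rw [hg] at h3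
  exact hp.out.one_lt.ne' (Nat.dvd_one.1 h3)

lemma local_bound (hp2 : p ≠ 2) (a b c d a' b' c' d' : ℤ)
    (hQ : descartesQ a b c d = 0) (hQ' : descartesQ a' b' c' d' = 0)
    (hg : Nat.gcd (Int.gcd a b) (Int.gcd c d) = 1)
    (hg' : Nat.gcd (Int.gcd a' b') (Int.gcd c' d') = 1)
    (N : ℕ)
    (hN : N = Nat.card {v : ZMod p × ZMod p × ZMod p × ZMod p //
      ((a + b : ℤ) : ZMod p) * v.1 ^ 2 +
        ((a + b + d - c : ℤ) : ZMod p) * v.1 * v.2.1 +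
        ((a + d : ℤ) : ZMod p) * v.2.1 ^ 2 -
      (((a' + b' : ℤ) : ZMod p) * v.2.2.1 ^ 2 +
        ((a' + b' + d' - c' : ℤ) : ZMod p) * v.2.2.1 * v.2.2.2 +
        ((a' + d' : ℤ) : ZMod p) * v.2.2.2 ^ 2) =
      ((a - a' : ℤ) : ZMod p)}) :
    N ≤ 2 * p ^ 3 ∧
    ((¬ (p : ℤ) ∣ a ∨ ¬ (p : ℤ) ∣ a') → N ≤ p ^ 3 + p ^ 2) ∧
    ((¬ (p : ℤ) ∣ a ∧ ¬ (p : ℤ) ∣ a' ∧ ¬ (p : ℤ) ∣ (a - a')) → N ≤ p ^ 3) := by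
  haveI : NeZero p := ⟨hp.out.ne_zero⟩
  have hF : ringChar (ZMod p) ≠ 2 := by
    rw [ZMod.ringChar_zmod_n]; exact hp2
  have h2 : (2 : ZMod p) ≠ 0 := Ring.two_ne_zero hF
  have h4 : (4 : ZMod p) ≠ 0 := by
    have : (4 : ZMod p) = 2 * 2 := by norm_num
    rw [this]; exact mul_ne_zero h2 h2
  have hcard : Fintype.card (ZMod p) = p := ZMod.card p
  rw [N_eq ((a + b : ℤ) : ZMod p) ((a + b + d - c : ℤ) : ZMod p) ((a + d : ℤ) : ZMod p)
    ((a' + b' : ℤ) : ZMod p) ((a' + b' + d' - c' : ℤ) : ZMod p) ((a' + d' : ℤ) : ZMod p)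
    ((a - a' : ℤ) : ZMod p)] at hN
  have hnz := not_all_zero hp2 a b c d hQ hg
  have hnz' := not_all_zero hp2 a' b' c' d' hQ' hg'
  have hdisc := disc_eq (p := p) a b c d hQ
  have hdisc' := disc_eq (p := p) a' b' c' d' hQ'
  refine ⟨?_, ?_, ?_⟩
  · -- crude bound
    rw [hN]
    have := bound_any (F := ZMod p)
      (A := ((a + b : ℤ) : ZMod p)) (B := ((a + b + d - c : ℤ) : ZMod p))
      (G := ((a + d : ℤ) : ZMod p)) (t := ((a - a' : ℤ) : ZMod p)) hnz'
    rwa [hcard] at this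
  · -- one of a, a' coprime to p
    rintro (hpa | hpa')
    · have haK : ((a : ℤ) : ZMod p) ≠ 0 := fun h =>
        hpa ((ZMod.intCast_zmod_eq_zero_iff_dvd a p).1 h)
      have hD : ((a + b + d - c : ℤ) : ZMod p) ^ 2
          - 4 * (((a + b : ℤ) : ZMod p) * ((a + d : ℤ) : ZMod p)) ≠ 0 := by
        rw [hdisc]
        exact mul_ne_zero (neg_ne_zero.2 h4) (pow_ne_zero _ haK)
      have hb := bound_one_left hF hD hnz' ((a - a' : ℤ) : ZMod p)
      rw [hcard] at hb
      rw [hN]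
      exact_mod_cast hb
    · have haK' : ((a' : ℤ) : ZMod p) ≠ 0 := fun h =>
        hpa' ((ZMod.intCast_zmod_eq_zero_iff_dvd a' p).1 h)
      have hD' : ((a' + b' + d' - c' : ℤ) : ZMod p) ^ 2
          - 4 * (((a' + b' : ℤ) : ZMod p) * ((a' + d' : ℤ) : ZMod p)) ≠ 0 := by
        rw [hdisc']
        exact mul_ne_zero (neg_ne_zero.2 h4) (pow_ne_zero _ haK')
      have hb := bound_one_right hF hD' hnz ((a - a' : ℤ) : ZMod p)
      rw [hcard] at hb
      rw [hN]
      exact_mod_cast hb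
  · rintro ⟨hpa, hpa', hpd⟩
    have haK : ((a : ℤ) : ZMod p) ≠ 0 := fun h =>
      hpa ((ZMod.intCast_zmod_eq_zero_iff_dvd a p).1 h)
    have haK' : ((a' : ℤ) : ZMod p) ≠ 0 := fun h =>
      hpa' ((ZMod.intCast_zmod_eq_zero_iff_dvd a' p).1 h)
    have htK : ((a - a' : ℤ) : ZMod p) ≠ 0 := fun h =>
      hpd ((ZMod.intCast_zmod_eq_zero_iff_dvd (a - a') p).1 h)
    have hD : ((a + b + d - c : ℤ) : ZMod p) ^ 2
        - 4 * (((a + b : ℤ) : ZMod p) * ((a + d : ℤ) : ZMod p)) ≠ 0 := by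
      rw [hdisc]
      exact mul_ne_zero (neg_ne_zero.2 h4) (pow_ne_zero _ haK)
    have hD' : ((a' + b' + d' - c' : ℤ) : ZMod p) ^ 2
        - 4 * (((a' + b' : ℤ) : ZMod p) * ((a' + d' : ℤ) : ZMod p)) ≠ 0 := by
      rw [hdisc']
      exact mul_ne_zero (neg_ne_zero.2 h4) (pow_ne_zero _ haK')
    have heq : quadraticChar (ZMod p) (((a + b + d - c : ℤ) : ZMod p) ^ 2
          - 4 * (((a + b : ℤ) : ZMod p) * ((a + d : ℤ) : ZMod p)))
        = quadraticChar (ZMod p) (((a' + b' + d' - c' : ℤ) : ZMod p) ^ 2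
          - 4 * (((a' + b' : ℤ) : ZMod p) * ((a' + d' : ℤ) : ZMod p))) := by
      rw [hdisc, hdisc', chi_neg_four_sq hF haK, chi_neg_four_sq hF haK']
    have hb := bound_good hF hD hD' heq htK
    rw [hcard] at hb
    rw [hN]
    exact_mod_cast hb

end ZModPart

end SSB

/-- Bound on the singular series of `F = f_a - f_{a'}` at the value `a - a'`:
every finite product of local densities
`p⁻³·#{v ∈ (ℤ/p)⁴ : F(v) ≡ a - a' (p)}` is at most
`C·2^{ω((a,a'))}·∏_{p | aa'(a-a'), p ∤ (a,a')} (1 + 1/p)`. -/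
theorem singular_series_upper_bound :
    ∃ C : ℝ, 0 < C ∧
    ∀ a a' : ℤ, 0 < a → 0 < a' → a ≠ a' →
    ∀ b c d b' c' d' : ℤ,
      descartesQ a b c d = 0 → descartesQ a' b' c' d' = 0 →
      Nat.gcd (Int.gcd a b) (Int.gcd c d) = 1 →
      Nat.gcd (Int.gcd a' b') (Int.gcd c' d') = 1 →
      0 < a + b → 0 < a' + b' →
    ∀ S : Finset ℕ, (∀ p ∈ S, p.Prime) →
      (∏ p ∈ S, (((p : ℝ) ^ 3)⁻¹ *
        (Nat.card {v : ZMod p × ZMod p × ZMod p × ZMod p //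
          ((a + b : ℤ) : ZMod p) * v.1 ^ 2 +
            ((a + b + d - c : ℤ) : ZMod p) * v.1 * v.2.1 +
            ((a + d : ℤ) : ZMod p) * v.2.1 ^ 2 -
          (((a' + b' : ℤ) : ZMod p) * v.2.2.1 ^ 2 +
            ((a' + b' + d' - c' : ℤ) : ZMod p) * v.2.2.1 * v.2.2.2 +
            ((a' + d' : ℤ) : ZMod p) * v.2.2.2 ^ 2) =
          ((a - a' : ℤ) : ZMod p)} : ℝ))) ≤
      C * 2 ^ ((Int.gcd a a').primeFactors.card) *
        ∏ p ∈ (a * a' * (a - a')).natAbs.primeFactors.filter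
            (fun p => ¬ p ∣ Int.gcd a a'),
          (1 + 1 / (p : ℝ)) := by
  classical
  refine ⟨2, two_pos, ?_⟩
  intro a a' ha ha' hne b c d b' c' d' hQ hQ' hg hg' hab hab' S hS
  set M : ℕ := (a * a' * (a - a')).natAbs with hM
  set T : Finset ℕ := M.primeFactors.filter (fun p => ¬ p ∣ Int.gcd a a') with hT
  have hGnz : Int.gcd a a' ≠ 0 := by
    intro h
    rw [Int.gcd_eq_zero_iff] at h
    exact ha.ne' h.1
  have hMnz : M ≠ 0 := by
    rw [hM, Int.natAbs_ne_zero]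
    exact mul_ne_zero (mul_ne_zero ha.ne' ha'.ne') (sub_ne_zero.2 hne)
  -- the local factor
  set f : ℕ → ℝ := fun p => (((p : ℝ) ^ 3)⁻¹ *
        (Nat.card {v : ZMod p × ZMod p × ZMod p × ZMod p //
          ((a + b : ℤ) : ZMod p) * v.1 ^ 2 +
            ((a + b + d - c : ℤ) : ZMod p) * v.1 * v.2.1 +
            ((a + d : ℤ) : ZMod p) * v.2.1 ^ 2 -
          (((a' + b' : ℤ) : ZMod p) * v.2.2.1 ^ 2 +
            ((a' + b' + d' - c' : ℤ) : ZMod p) * v.2.2.1 * v.2.2.2 +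
            ((a' + d' : ℤ) : ZMod p) * v.2.2.2 ^ 2) =
          ((a - a' : ℤ) : ZMod p)} : ℝ)) with hf
  set g : ℕ → ℝ := fun p =>
    if p = 2 ∨ p ∣ Int.gcd a a' then 2 else if p ∈ T then 1 + 1 / (p : ℝ) else 1 with hgdef
  have hf0 : ∀ p ∈ S, 0 ≤ f p := fun p _ => by
    simp only [hf]
    positivity
  have hfg : ∀ p ∈ S, f p ≤ g p := by
    intro p hpS
    have hp : p.Prime := hS p hpS
    haveI : Fact p.Prime := ⟨hp⟩
    have hppos : (0 : ℝ) < (p : ℝ) := by exact_mod_cast hp.pos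
    have hp3 : (0 : ℝ) < (p : ℝ) ^ 3 := by positivity
    simp only [hf, hgdef]
    set N : ℕ := Nat.card {v : ZMod p × ZMod p × ZMod p × ZMod p //
          ((a + b : ℤ) : ZMod p) * v.1 ^ 2 +
            ((a + b + d - c : ℤ) : ZMod p) * v.1 * v.2.1 +
            ((a + d : ℤ) : ZMod p) * v.2.1 ^ 2 -
          (((a' + b' : ℤ) : ZMod p) * v.2.2.1 ^ 2 +
            ((a' + b' + d' - c' : ℤ) : ZMod p) * v.2.2.1 * v.2.2.2 +
            ((a' + d' : ℤ) : ZMod p) * v.2.2.2 ^ 2) =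
          ((a - a' : ℤ) : ZMod p)} with hNdef
    by_cases hp2 : p = 2
    · rw [if_pos (Or.inl hp2)]
      subst hp2
      have h16 : N ≤ 16 := by
        rw [hNdef, Nat.card_eq_fintype_card]
        calc Fintype.card _ ≤ Fintype.card (ZMod 2 × ZMod 2 × ZMod 2 × ZMod 2) :=
            Fintype.card_subtype_le _
          _ = 16 := by simp [ZMod.card]
      have h16R : (N : ℝ) ≤ 16 := by exact_mod_cast h16
      rw [show ((2 : ℕ) : ℝ) = (2 : ℝ) from by norm_cast]
      rw [inv_mul_le_iff₀ (by norm_num : (0:ℝ) < (2:ℝ)^3)]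
      calc (N : ℝ) ≤ 16 := h16R
        _ = 2 ^ 3 * 2 := by norm_num
    · have hbounds := SSB.local_bound hp2 a b c d a' b' c' d' hQ hQ' hg hg' N hNdef
      by_cases hc1 : p = 2 ∨ p ∣ Int.gcd a a'
      · rw [if_pos hc1]
        have hlocR : (N : ℝ) ≤ 2 * (p : ℝ) ^ 3 := by exact_mod_cast hbounds.1
        rw [inv_mul_le_iff₀ hp3]
        calc (N : ℝ) ≤ 2 * (p : ℝ) ^ 3 := hlocR
          _ = (p : ℝ) ^ 3 * 2 := by ring
      · push_neg at hc1
        obtain ⟨_, hpg⟩ := hc1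
        rw [if_neg (not_or.2 ⟨hp2, hpg⟩)]
        have hor : ¬ (p : ℤ) ∣ a ∨ ¬ (p : ℤ) ∣ a' := by
          by_contra hcon
          push_neg at hcon
          have : (p : ℤ) ∣ Int.gcd a a' := Int.dvd_coe_gcd hcon.1 hcon.2
          exact hpg (Int.natCast_dvd_natCast.1 this)
        by_cases hpT : p ∈ T
        · rw [if_pos hpT]
          have hlocR : (N : ℝ) ≤ (p : ℝ) ^ 3 + (p : ℝ) ^ 2 := by
            exact_mod_cast hbounds.2.1 hor
          rw [inv_mul_le_iff₀ hp3]
          calc (N : ℝ) ≤ (p : ℝ) ^ 3 + (p : ℝ) ^ 2 := hlocR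
            _ = (p : ℝ) ^ 3 * (1 + 1 / (p : ℝ)) := by field_simp
        · rw [if_neg hpT]
          have hnd : ¬ (p : ℤ) ∣ (a * a' * (a - a')) := by
            intro hdvd
            apply hpT
            rw [hT]
            refine Finset.mem_filter.2 ⟨?_, hpg⟩
            have hdM : p ∣ M := by
              have h1 : (p : ℤ) ∣ ((M : ℕ) : ℤ) := (Int.dvd_natAbs).2 hdvd
              exact_mod_cast h1
            exact Nat.mem_primeFactors.2 ⟨hp, hdM, hMnz⟩
          have h3 : ¬ (p : ℤ) ∣ a ∧ ¬ (p : ℤ) ∣ a' ∧ ¬ (p : ℤ) ∣ (a - a') := by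
            refine ⟨fun h => hnd ?_, fun h => hnd ?_, fun h => hnd ?_⟩
            · exact Dvd.dvd.mul_right (Dvd.dvd.mul_right h a') (a - a')
            · exact Dvd.dvd.mul_right (Dvd.dvd.mul_left h a) (a - a')
            · exact Dvd.dvd.mul_left h (a * a')
          have hlocR : (N : ℝ) ≤ (p : ℝ) ^ 3 := by exact_mod_cast hbounds.2.2 h3
          rw [inv_mul_le_iff₀ hp3]
          calc (N : ℝ) ≤ (p : ℝ) ^ 3 := hlocR
            _ = (p : ℝ) ^ 3 * 1 := by ring
  -- assemble the product
  have step1 : ∏ p ∈ S, f p ≤ ∏ p ∈ S, g p := Finset.prod_le_prod hf0 hfg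
  have hgsplit : ∏ p ∈ S, g p
      = (∏ p ∈ S.filter (fun p => p = 2 ∨ p ∣ Int.gcd a a'), g p)
        * ∏ p ∈ S.filter (fun p => ¬(p = 2 ∨ p ∣ Int.gcd a a')), g p :=
    (Finset.prod_filter_mul_prod_filter_not S _ g).symm
  have h1 : ∏ p ∈ S.filter (fun p => p = 2 ∨ p ∣ Int.gcd a a'), g p
      ≤ 2 * 2 ^ ((Int.gcd a a').primeFactors.card) := by
    have hval : ∀ p ∈ S.filter (fun p => p = 2 ∨ p ∣ Int.gcd a a'), g p = 2 := by
      intro p hp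
      simp only [hgdef]
      exact if_pos (Finset.mem_filter.1 hp).2
    rw [Finset.prod_congr rfl hval, Finset.prod_const]
    have hsub : S.filter (fun p => p = 2 ∨ p ∣ Int.gcd a a')
        ⊆ insert 2 ((Int.gcd a a').primeFactors) := by
      intro p hp
      obtain ⟨hpS, hc⟩ := Finset.mem_filter.1 hp
      rcases hc with h | h
      · exact Finset.mem_insert.2 (Or.inl h)
      · exact Finset.mem_insert.2 (Or.inr (Nat.mem_primeFactors.2 ⟨hS p hpS, h, hGnz⟩))
    have hcard : (S.filter (fun p => p = 2 ∨ p ∣ Int.gcd a a')).card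
        ≤ (Int.gcd a a').primeFactors.card + 1 := by
      calc (S.filter (fun p => p = 2 ∨ p ∣ Int.gcd a a')).card
          ≤ (insert 2 ((Int.gcd a a').primeFactors)).card := Finset.card_le_card hsub
        _ ≤ (Int.gcd a a').primeFactors.card + 1 := Finset.card_insert_le _ _
    calc (2 : ℝ) ^ (S.filter (fun p => p = 2 ∨ p ∣ Int.gcd a a')).card
        ≤ 2 ^ ((Int.gcd a a').primeFactors.card + 1) :=
          pow_le_pow_right₀ (by norm_num) hcard
      _ = 2 * 2 ^ ((Int.gcd a a').primeFactors.card) := by ring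
  have h2 : ∏ p ∈ S.filter (fun p => ¬(p = 2 ∨ p ∣ Int.gcd a a')), g p
      ≤ ∏ p ∈ T, (1 + 1 / (p : ℝ)) := by
    have hval : ∀ p ∈ S.filter (fun p => ¬(p = 2 ∨ p ∣ Int.gcd a a')), g p
        = if p ∈ T then 1 + 1 / (p : ℝ) else 1 := by
      intro p hp
      simp only [hgdef]
      rw [if_neg (Finset.mem_filter.1 hp).2]
    rw [Finset.prod_congr rfl hval, ← Finset.prod_filter]
    have hsub : ((S.filter (fun p => ¬(p = 2 ∨ p ∣ Int.gcd a a'))).filter (fun p => p ∈ T))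
        ⊆ T := fun q hq => (Finset.mem_filter.1 hq).2
    calc ∏ q ∈ (S.filter (fun p => ¬(p = 2 ∨ p ∣ Int.gcd a a'))).filter (fun p => p ∈ T),
            (1 + 1 / (q : ℝ))
        = ∏ q ∈ T, (if q ∈ (S.filter (fun p => ¬(p = 2 ∨ p ∣ Int.gcd a a'))).filter
              (fun p => p ∈ T) then 1 + 1 / (q : ℝ) else 1) := by
          rw [Finset.prod_ite_mem, Finset.inter_eq_right.2 hsub]
      _ ≤ ∏ q ∈ T, (1 + 1 / (q : ℝ)) := by
          refine Finset.prod_le_prod (fun q _ => ?_) (fun q _ => ?_)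
          · split <;> positivity
          · split
            · exact le_refl _
            · have : (0 : ℝ) ≤ 1 / (q : ℝ) := by positivity
              linarith
  have hT0 : (0 : ℝ) ≤ ∏ p ∈ T, (1 + 1 / (p : ℝ)) :=
    Finset.prod_nonneg fun p _ => by positivity
  have h10 : (0 : ℝ) ≤ ∏ p ∈ S.filter (fun p => p = 2 ∨ p ∣ Int.gcd a a'), g p :=
    Finset.prod_nonneg fun p hp => by
      simp only [hgdef]
      rw [if_pos (Finset.mem_filter.1 hp).2]; norm_num
  have h20 : (0 : ℝ) ≤ ∏ p ∈ S.filter (fun p => ¬(p = 2 ∨ p ∣ Int.gcd a a')), g p :=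
    Finset.prod_nonneg fun p hp => by
      simp only [hgdef]
      rw [if_neg (Finset.mem_filter.1 hp).2]
      by_cases hpT : p ∈ T
      · rw [if_pos hpT]; positivity
      · rw [if_neg hpT]; norm_num
  calc ∏ p ∈ S, f p ≤ ∏ p ∈ S, g p := step1
    _ = _ * _ := hgsplit
    _ ≤ (2 * 2 ^ ((Int.gcd a a').primeFactors.card)) * ∏ p ∈ T, (1 + 1 / (p : ℝ)) := by
        exact mul_le_mul h1 h2 h20 (by positivity)
    _ = 2 * 2 ^ ((Int.gcd a a').primeFactors.card) * ∏ p ∈ T, (1 + 1 / (p : ℝ)) := by ring
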